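/- If X is a Tychonoff (completely regular Hausdorff) topological space such that the product space X × X is extremally disconnected, then X is discrete. -/

import Mathlib

open Set

/-- If `X` is a Tychonoff (completely regular Hausdorff) space such that `X × X`
is extremally disconnected, then `X` is discrete. -/
theorem stmt1 {X : Type*} [TopologicalSpace X] [T35Space X]
    [ExtremallyDisconnected (X × X)] : DiscreteTopology X := by
  have hED : ∀ U V : Set (X × X), IsOpen U → IsOpen V → Disjoint U V →
      Disjoint (closure U) (closure V) := by
    intro U V hU hV h
    exact (h.closure_left hV).closure_right (ExtremallyDisconnected.open_closure U hU)
  set σ : X × X ≃ₜ X × X := Homeomorph.prodComm X X with hσ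
  have hσpre : ∀ s : Set (X × X), σ ⁻¹' closure s = closure (σ ⁻¹' s) := fun s =>
    σ.preimage_closure s
  have hσσ : ∀ s : Set (X × X), σ ⁻¹' (σ ⁻¹' s) = s := by
    intro s; ext p; simp [hσ]
  -- Zorn: maximal open U with U disjoint from σ ⁻¹' U
  obtain ⟨U, hUmax⟩ :
      ∃ U, Maximal (· ∈ {U : Set (X × X) | IsOpen U ∧ Disjoint U (σ ⁻¹' U)}) U := by
    apply zorn_subset

    intro c hc hchain
    refine ⟨⋃₀ c, ⟨isOpen_sUnion fun s hs => (hc hs).1, ?_⟩, fun s hs => subset_sUnion_of_mem hs⟩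
    rw [Set.disjoint_left]
    rintro p ⟨u, huc, hpu⟩ hp
    rw [Set.mem_preimage, Set.mem_sUnion] at hp
    obtain ⟨v, hvc, hpv⟩ := hp
    rcases hchain.total huc hvc with h | h
    · exact Set.disjoint_left.mp (hc hvc).2 (h hpu) hpv
    · exact Set.disjoint_left.mp (hc huc).2 hpu (h hpv)
  obtain ⟨⟨hUo, hUd⟩, hUmax'⟩ := hUmax
  have hclU : IsOpen (closure U) := ExtremallyDisconnected.open_closure U hUo
  have hclσU : IsOpen (closure (σ ⁻¹' U)) :=
    ExtremallyDisconnected.open_closure _ (hUo.preimage σ.continuous)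
  have hdisj : Disjoint (closure U) (closure (σ ⁻¹' U)) :=
    hED U (σ ⁻¹' U) hUo (hUo.preimage σ.continuous) hUd
  set W : Set (X × X) := (closure U ∪ closure (σ ⁻¹' U))ᶜ with hWdef
  have hWo : IsOpen W := (isClosed_closure.union isClosed_closure).isOpen_compl
  have hWinv : σ ⁻¹' W = W := by
    rw [hWdef, Set.preimage_compl, Set.preimage_union, hσpre, hσpre, hσσ, Set.union_comm]
  -- W ⊆ diagonal
  have hWdiag : W ⊆ Set.diagonal X := by
    intro w hw
    by_contra hne
    have hwne : w ≠ σ w := by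
      simp only [Set.mem_diagonal_iff] at hne
      intro h; apply hne
      have := congrArg Prod.snd h
      simpa [hσ] using this.symm
    obtain ⟨O₁, O₂, hO₁, hO₂, hw₁, hw₂, hO₁₂⟩ := t2_separation hwne
    set O : Set (X × X) := O₁ ∩ σ ⁻¹' O₂ ∩ W with hOdef
    have hOo : IsOpen O := ((hO₁.inter (hO₂.preimage σ.continuous)).inter hWo)
    have hwO : w ∈ O := ⟨⟨hw₁, hw₂⟩, hw⟩
    have hOW : O ⊆ W := fun p hp => hp.2
    have key : Disjoint (U ∪ O) (σ ⁻¹' (U ∪ O)) := by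
      rw [Set.preimage_union, Set.disjoint_union_left, Set.disjoint_union_right,
        Set.disjoint_union_right]
      refine ⟨⟨hUd, ?_⟩, ⟨?_, ?_⟩⟩
      · -- Disjoint U (σ ⁻¹' O)
        have : σ ⁻¹' O ⊆ W := by rw [← hWinv]; exact Set.preimage_mono hOW
        exact Set.disjoint_left.mpr fun p hpU hpO =>
          (this hpO) (Set.mem_union_left _ (subset_closure hpU))
      · -- Disjoint O (σ ⁻¹' U)
        exact Set.disjoint_left.mpr fun p hpO hpU =>
          (hOW hpO) (Set.mem_union_right _ (subset_closure hpU))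
      · -- Disjoint O (σ ⁻¹' O)
        refine Set.disjoint_left.mpr fun p hpO hpO' => ?_
        have h1 : p ∈ O₁ := hpO.1.1
        have h2 : p ∈ O₂ := by
          have := hpO'.1.2
          rw [Set.mem_preimage] at this
          simpa [hσ] using this
        exact Set.disjoint_left.mp hO₁₂ h1 h2
    have : U ∪ O ⊆ U := hUmax' ⟨hUo.union hOo, key⟩ Set.subset_union_left
    have hwU : w ∈ U := this (Set.mem_union_right _ hwO)
    exact hw (Set.mem_union_left _ (subset_closure hwU))
  -- diagonal ⊆ W
  have hdiagW : Set.diagonal X ⊆ W := by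
    intro z hz
    have hzfix : σ z = z := by
      obtain ⟨a, b⟩ := z
      simp only [Set.mem_diagonal_iff] at hz
      simp [hσ, hz]
    intro hmem
    rcases hmem with h | h
    · have : z ∈ closure (σ ⁻¹' U) := by
        rw [← hσpre, Set.mem_preimage, hzfix]; exact h
      exact Set.disjoint_left.mp hdisj h this
    · have : z ∈ closure U := by
        have h2 : z ∈ σ ⁻¹' closure (σ ⁻¹' U) := by
          rw [Set.mem_preimage, hzfix]; exact h
        rw [hσpre, hσσ] at h2
        exact h2
      exact Set.disjoint_left.mp hdisj this h
  have hdiagOpen : IsOpen (Set.diagonal X) := by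
    rw [← Subset.antisymm hWdiag hdiagW]
    exact hWo
  rw [discreteTopology_iff_isOpen_singleton]
  intro x
  have : {x} = (fun y => ((x, y) : X × X)) ⁻¹' Set.diagonal X := by
    ext y; simp [Set.mem_diagonal_iff, eq_comm]
  rw [this]
  exact hdiagOpen.preimage (Continuous.prodMk_right x)
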